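/- Suppose each g^m satisfies: ∇²_{yy} g^m(x,y) ⪰ μ I_p, ||∇²_{xy} g^m(x,y)|| ≤ C_{gxy}, ∇²_{xy} g^m is L_{gxy}-Lipschitz continuous, and ∇²_{yy} g^m is L_{gyy}-Lipschitz continuous (jointly in (x,y)). Then the Jacobian of the minimizer mapping, ∇y*(x), is L_y-Lipschitz continuous with L_y = (C_{gxy} L_{gyy}/μ² + L_{gxy}/μ)(1 + C_{gxy}/μ), i.e., ||∇y*(x_1) - ∇y*(x_2)|| ≤ L_y ||x_1 - x_2|| for all x_1, x_2. -/

import Mathlib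

open InnerProductSpace

/-- Strong monotonicity of the differential of a strongly convex function. -/
lemma aux_strong_mono {E : Type*} [NormedAddCommGroup E] [InnerProductSpace ℝ E]
    {f : E → ℝ} {μ : ℝ} (hf : Differentiable ℝ f) (hsc : StrongConvexOn Set.univ μ f)
    (a b : E) : μ * ‖a - b‖ ^ 2 ≤ fderiv ℝ f a (a - b) - fderiv ℝ f b (a - b) := by
  set v := a - b with hv
  have hconv : ConvexOn ℝ Set.univ fun x => f x - μ / 2 * ‖x‖ ^ 2 :=
    strongConvexOn_iff_convex.mp hsc
  have hc : ∀ t : ℝ, HasDerivAt (fun t : ℝ => t • v + b) v t := fun t => by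
    simpa using ((hasDerivAt_id t).smul_const v).add_const b
  have hφ : ∀ t : ℝ, HasDerivAt (fun t : ℝ => f (t • v + b) - μ / 2 * ‖t • v + b‖ ^ 2)
      (fderiv ℝ f (t • v + b) v - μ * inner ℝ (t • v + b) v) t := by
    intro t
    have h1 : HasDerivAt (fun t : ℝ => f (t • v + b)) (fderiv ℝ f (t • v + b) v) t :=
      (hf (t • v + b)).hasFDerivAt.comp_hasDerivAt t (hc t)
    have h2 : HasDerivAt (fun t : ℝ => (inner ℝ (t • v + b) (t • v + b) : ℝ))
        ((inner ℝ (t • v + b) v : ℝ) + inner ℝ v (t • v + b)) t :=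
      (hc t).inner ℝ (hc t)
    have h2' : HasDerivAt (fun t : ℝ => μ / 2 * ‖t • v + b‖ ^ 2)
        (μ / 2 * ((inner ℝ (t • v + b) v : ℝ) + inner ℝ v (t • v + b))) t := by
      have he : (fun t : ℝ => μ / 2 * ‖t • v + b‖ ^ 2)
          = fun t : ℝ => μ / 2 * (inner ℝ (t • v + b) (t • v + b) : ℝ) := by
        funext t; rw [real_inner_self_eq_norm_sq]
      rw [he]; exact h2.const_mul _
    have h3 := h1.sub h2'
    refine h3.congr_deriv ?_
    rw [real_inner_comm v (t • v + b)]
    ring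
  have hφconv : ConvexOn ℝ Set.univ fun t : ℝ => f (t • v + b) - μ / 2 * ‖t • v + b‖ ^ 2 := by
    have h := hconv.comp_affineMap (AffineMap.lineMap b a)
    have he : ((fun x => f x - μ / 2 * ‖x‖ ^ 2) ∘ (AffineMap.lineMap b a : ℝ →ᵃ[ℝ] E))
        = fun t : ℝ => f (t • v + b) - μ / 2 * ‖t • v + b‖ ^ 2 := by
      funext t
      have harg : (AffineMap.lineMap b a : ℝ →ᵃ[ℝ] E) t = t • v + b := by
        rw [AffineMap.lineMap_apply_module, hv]; module
      simp only [Function.comp]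
      rw [harg]
    rwa [Set.preimage_univ, he] at h
  have hmono := hφconv.monotoneOn_deriv fun t _ => (hφ t).differentiableAt
  have h01 := hmono (Set.mem_univ (0 : ℝ)) (Set.mem_univ (1 : ℝ)) zero_le_one
  rw [(hφ 0).deriv, (hφ 1).deriv] at h01
  have h0 : (0 : ℝ) • v + b = b := by simp
  have h1' : (1 : ℝ) • v + b = a := by simp [hv]
  rw [h0, h1'] at h01
  have hinner : (inner ℝ a v : ℝ) - inner ℝ b v = ‖v‖ ^ 2 := by
    rw [← inner_sub_left, ← hv, real_inner_self_eq_norm_sq]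
  have hexp : μ * (inner ℝ a v : ℝ) - μ * inner ℝ b v = μ * ‖v‖ ^ 2 := by
    rw [← mul_sub, hinner]
  linarith [h01, hexp]

/-- Coercivity of the Hessian of a strongly convex function. -/
lemma aux_hessian_coercive {E : Type*} [NormedAddCommGroup E] [InnerProductSpace ℝ E]
    [CompleteSpace E] {f : E → ℝ} {μ : ℝ} (hf : Differentiable ℝ f)
    (hsc : StrongConvexOn Set.univ μ f) {y : E} {B : E →L[ℝ] E}
    (hB : HasFDerivAt (gradient f) B y) (v : E) :
    μ * ‖v‖ ^ 2 ≤ (inner ℝ (B v) v : ℝ) := by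
  have hgrad : ∀ x w, (inner ℝ (gradient f x) w : ℝ) = fderiv ℝ f x w := by
    intro x w
    rw [gradient, ← InnerProductSpace.toDual_apply_apply,
      LinearIsometryEquiv.apply_symm_apply]
  have hc : ∀ t : ℝ, HasDerivAt (fun t : ℝ => t • v + y) v t := fun t => by
    simpa using ((hasDerivAt_id t).smul_const v).add_const y
  have hms : HasDerivAt (fun t : ℝ => gradient f (t • v + y)) (B v) 0 := by
    have h0 : (0 : ℝ) • v + y = y := by simp
    have hB' : HasFDerivAt (gradient f) B ((0:ℝ) • v + y) := by rw [h0]; exact hB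
    exact hB'.comp_hasDerivAt 0 (hc 0)
  have htend : Filter.Tendsto
      (fun t : ℝ => (inner ℝ (slope (fun t : ℝ => gradient f (t • v + y)) 0 t) v : ℝ))
      (nhdsWithin 0 {(0:ℝ)}ᶜ) (nhds (inner ℝ (B v) v : ℝ)) :=
    ((hasDerivAt_iff_tendsto_slope.mp hms).inner tendsto_const_nhds)
  refine ge_of_tendsto htend ?_
  refine Filter.eventually_of_mem self_mem_nhdsWithin ?_
  intro t ht
  have htne : t ≠ 0 := ht
  have hkey := aux_strong_mono hf hsc (t • v + y) y
  have hsub : (t • v + y) - y = t • v := by abel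
  rw [hsub] at hkey
  have hrw : fderiv ℝ f (t • v + y) (t • v) - fderiv ℝ f y (t • v)
      = (inner ℝ (gradient f (t • v + y) - gradient f y) (t • v) : ℝ) := by
    rw [inner_sub_left, hgrad, hgrad]
  rw [hrw] at hkey
  have hnorm : ‖t • v‖ ^ 2 = t ^ 2 * ‖v‖ ^ 2 := by
    rw [norm_smul]; simp [mul_pow, Real.norm_eq_abs, sq_abs]
  rw [hnorm, real_inner_smul_right] at hkey
  -- hkey : μ * (t ^ 2 * ‖v‖ ^ 2) ≤ t * ⟪ΔG, v⟫
  have hslope : slope (fun t : ℝ => gradient f (t • v + y)) 0 t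
      = t⁻¹ • (gradient f (t • v + y) - gradient f y) := by
    rw [slope_def_module]
    simp
  rw [hslope, real_inner_smul_left]
  set c : ℝ := (inner ℝ (gradient f (t • v + y) - gradient f y) v : ℝ) with hcdef
  have ht2 : (0:ℝ) < t ^ 2 := by positivity
  have : μ * ‖v‖ ^ 2 = μ * (t ^ 2 * ‖v‖ ^ 2) / t ^ 2 := by field_simp
  rw [this, show t⁻¹ * c = t * c / t ^ 2 by field_simp]
  exact div_le_div_of_nonneg_right hkey ht2.le


section
variable {E F : Type*} [NormedAddCommGroup E] [NormedSpace ℝ E]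
  [NormedAddCommGroup F] [InnerProductSpace ℝ F] [CompleteSpace F]

/-- The partial-in-`y` Fréchet derivative of a jointly differentiable function. -/
lemma aux_partial_fderiv (f : E → F → ℝ) (hf : Differentiable ℝ (fun q : E × F => f q.1 q.2))
    (q : E × F) : fderiv ℝ (fun y' => f q.1 y') q.2
      = (fderiv ℝ (fun q : E × F => f q.1 q.2) q).comp (ContinuousLinearMap.inr ℝ E F) :=
  by have h := (hf q).hasFDerivAt.comp q.2 (hasFDerivAt_prodMk_right (𝕜 := ℝ) q.1 q.2); exact h.fderiv

/-- The joint partial-gradient map, rewritten through the dual pairing. -/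
lemma aux_G_eq (f : E → F → ℝ) (hf : Differentiable ℝ (fun q : E × F => f q.1 q.2)) :
    (fun q : E × F => gradient (fun y' => f q.1 y') q.2)
      = fun q : E × F =>
        (((InnerProductSpace.toDual ℝ F).symm.toContinuousLinearEquiv :
            StrongDual ℝ F ≃L[ℝ] F).toContinuousLinearMap.comp
          ((ContinuousLinearMap.compL ℝ F (E × F) ℝ).flip (ContinuousLinearMap.inr ℝ E F)))
        (fderiv ℝ (fun q : E × F => f q.1 q.2) q) := by
  funext q
  show (InnerProductSpace.toDual ℝ F).symm (fderiv ℝ (fun y' => f q.1 y') q.2) = _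
  rw [aux_partial_fderiv f hf q]
  rfl

/-- Differentiability of the joint partial-gradient map. -/
lemma aux_G_diff (f : E → F → ℝ) (hf : ContDiff ℝ 2 (fun q : E × F => f q.1 q.2)) :
    Differentiable ℝ (fun q : E × F => gradient (fun y' => f q.1 y') q.2) := by
  rw [aux_G_eq f (hf.differentiable (by norm_num))]
  exact (ContinuousLinearMap.differentiable _).comp
    ((hf.fderiv_right (m := 1) (by norm_num)).differentiable (by norm_num))

/-- The Fréchet derivative of the joint partial-gradient map splits into its partials. -/
lemma aux_G_fderiv (f : E → F → ℝ) (hf : ContDiff ℝ 2 (fun q : E × F => f q.1 q.2))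
    (x : E) (y : F) (u : E) (v : F) :
    fderiv ℝ (fun q : E × F => gradient (fun y' => f q.1 y') q.2) (x, y) (u, v)
      = fderiv ℝ (fun x' => gradient (fun y' => f x' y') y) x u
        + fderiv ℝ (gradient (fun y' => f x y')) y v := by
  have hGd := aux_G_diff f hf
  have hL : fderiv ℝ (fun x' => gradient (fun y' => f x' y') y) x
      = (fderiv ℝ (fun q : E × F => gradient (fun y' => f q.1 y') q.2) (x, y)).comp
        (ContinuousLinearMap.inl ℝ E F) :=
    by have h := (hGd (x, y)).hasFDerivAt.comp x (hasFDerivAt_prodMk_left (𝕜 := ℝ) x y); exact h.fderiv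
  have hR : fderiv ℝ (gradient (fun y' => f x y')) y
      = (fderiv ℝ (fun q : E × F => gradient (fun y' => f q.1 y') q.2) (x, y)).comp
        (ContinuousLinearMap.inr ℝ E F) :=
    by have h := (hGd (x, y)).hasFDerivAt.comp y (hasFDerivAt_prodMk_right x y); exact h.fderiv
  rw [hL, hR]
  simp only [ContinuousLinearMap.comp_apply, ContinuousLinearMap.inl_apply,
    ContinuousLinearMap.inr_apply]
  rw [← map_add]
  congr 1
  simp

end



set_option maxHeartbeats 2000000 in
/-- If each `g^m` satisfies `∇²_{yy} g^m ⪰ μ I` (i.e. `μ`-strong convexity in `y`),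
`‖∇²_{xy} g^m‖ ≤ C_{gxy}`, and the second derivatives `∇²_{xy} g^m`, `∇²_{yy} g^m`
are `L_{gxy}`- resp. `L_{gyy}`-Lipschitz jointly in `(x,y)` (w.r.t. the Euclidean
norm of the joint variable), then the Jacobian `∇y*(x)` of the minimizer mapping
is `L_y`-Lipschitz with `L_y = (C_{gxy} L_{gyy}/μ² + L_{gxy}/μ)(1 + C_{gxy}/μ)`. -/
theorem ystar_jacobian_lipschitz (d p M : ℕ) (hM : 0 < M)
    (μ Cgxy Lgxy Lgyy : ℝ) (hμ : 0 < μ) (hC : 0 ≤ Cgxy) (hLxy : 0 ≤ Lgxy) (hLyy : 0 ≤ Lgyy)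
    (g : Fin M → EuclideanSpace ℝ (Fin d) → EuclideanSpace ℝ (Fin p) → ℝ)
    (hg : ∀ m, ContDiff ℝ 2
      (fun q : EuclideanSpace ℝ (Fin d) × EuclideanSpace ℝ (Fin p) => g m q.1 q.2))
    (hsc : ∀ m x, StrongConvexOn Set.univ μ (fun y => g m x y))
    (Hxy : Fin M → EuclideanSpace ℝ (Fin d) → EuclideanSpace ℝ (Fin p) →
      (EuclideanSpace ℝ (Fin d) →L[ℝ] EuclideanSpace ℝ (Fin p)))
    (hHxy : ∀ m x y, Hxy m x y =
      fderiv ℝ (fun x' => gradient (fun y' => g m x' y') y) x)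
    (Hyy : Fin M → EuclideanSpace ℝ (Fin d) → EuclideanSpace ℝ (Fin p) →
      (EuclideanSpace ℝ (Fin p) →L[ℝ] EuclideanSpace ℝ (Fin p)))
    (hHyy : ∀ m x y, Hyy m x y = fderiv ℝ (gradient (fun y' => g m x y')) y)
    (hcross_bound : ∀ m x y, ‖Hxy m x y‖ ≤ Cgxy)
    (hcross_lip : ∀ m x1 y1 x2 y2, ‖Hxy m x1 y1 - Hxy m x2 y2‖ ≤
      Lgxy * Real.sqrt (‖x1 - x2‖ ^ 2 + ‖y1 - y2‖ ^ 2))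
    (hyy_lip : ∀ m x1 y1 x2 y2, ‖Hyy m x1 y1 - Hyy m x2 y2‖ ≤
      Lgyy * Real.sqrt (‖x1 - x2‖ ^ 2 + ‖y1 - y2‖ ^ 2))
    (ystar : EuclideanSpace ℝ (Fin d) → EuclideanSpace ℝ (Fin p))
    (hystar : Differentiable ℝ ystar)
    (hmin : ∀ x y, (M : ℝ)⁻¹ * ∑ m, g m x (ystar x) ≤ (M : ℝ)⁻¹ * ∑ m, g m x y) :
    ∀ x1 x2, ‖fderiv ℝ ystar x1 - fderiv ℝ ystar x2‖ ≤
      (Cgxy * Lgyy / μ ^ 2 + Lgxy / μ) * (1 + Cgxy / μ) * ‖x1 - x2‖ := by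
  intro x1 x2
  have hMpos : (0:ℝ) < (M:ℝ) := by exact_mod_cast hM
  -- basic differentiability facts
  have hGdiff : ∀ m, Differentiable ℝ
      (fun q : EuclideanSpace ℝ (Fin d) × EuclideanSpace ℝ (Fin p) =>
        gradient (fun y' => g m q.1 y') q.2) := fun m => aux_G_diff (g m) (hg m)
  have hpdiff : ∀ m x, Differentiable ℝ (fun y' => g m x y') := by
    intro m x y
    exact (((hg m).differentiable (by norm_num)) (x, y)).comp y
      ((differentiableAt_const x).prodMk differentiableAt_id)
  have hgraddiff : ∀ m x, Differentiable ℝ (gradient (fun y' => g m x y')) := by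
    intro m x y
    exact ((hGdiff m) (x, y)).comp y ((differentiableAt_const x).prodMk differentiableAt_id)
  -- the averaged gradient vanishes along the minimizer
  have hsumzero : ∀ x, ∑ m, gradient (fun y' => g m x y') (ystar x) = 0 := by
    intro x
    have hlm : IsLocalMin (fun y => (M:ℝ)⁻¹ * ∑ m, g m x y) (ystar x) :=
      Filter.Eventually.of_forall fun y => hmin x y
    have h0 := hlm.fderiv_eq_zero
    have hds : DifferentiableAt ℝ (fun y => ∑ m, g m x y) (ystar x) :=
      DifferentiableAt.fun_sum fun m _ => hpdiff m x (ystar x)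
    rw [fderiv_const_mul hds, fderiv_fun_sum fun m _ => hpdiff m x (ystar x)] at h0
    have hM0 : (M:ℝ)⁻¹ ≠ 0 := by positivity
    have h2 : ∑ m, fderiv ℝ (fun y' => g m x y') (ystar x) = 0 := by
      rcases smul_eq_zero.mp h0 with h | h
      · exact absurd h hM0
      · exact h
    calc ∑ m, gradient (fun y' => g m x y') (ystar x)
        = (InnerProductSpace.toDual ℝ (EuclideanSpace ℝ (Fin p))).symm
            (∑ m, fderiv ℝ (fun y' => g m x y') (ystar x)) := by rw [map_sum]; rfl
      _ = 0 := by rw [h2, map_zero]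
  -- the implicit-function identity
  have hident : ∀ x (u : EuclideanSpace ℝ (Fin d)),
      (∑ m, Hxy m x (ystar x)) u
        + (∑ m, Hyy m x (ystar x)) (fderiv ℝ ystar x u) = 0 := by
    intro x u
    have hP : HasFDerivAt (fun x' => (x', ystar x'))
        ((ContinuousLinearMap.id ℝ _).prod (fderiv ℝ ystar x)) x :=
      (hasFDerivAt_id x).prodMk (hystar x).hasFDerivAt
    have hsum : HasFDerivAt (fun x' => ∑ m, gradient (fun y' => g m x' y') (ystar x'))
        (∑ m, (fderiv ℝ (fun q : EuclideanSpace ℝ (Fin d) × EuclideanSpace ℝ (Fin p) =>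
            gradient (fun y' => g m q.1 y') q.2) (x, ystar x)).comp
          ((ContinuousLinearMap.id ℝ _).prod (fderiv ℝ ystar x))) x :=
      HasFDerivAt.fun_sum fun m _ => by have h := ((hGdiff m) (x, ystar x)).hasFDerivAt.comp x hP; exact h
    have hzero : HasFDerivAt (fun x' => ∑ m, gradient (fun y' => g m x' y') (ystar x'))
        (0 : EuclideanSpace ℝ (Fin d) →L[ℝ] EuclideanSpace ℝ (Fin p)) x := by
      have he : (fun x' => ∑ m, gradient (fun y' => g m x' y') (ystar x'))
          = fun _ => (0 : EuclideanSpace ℝ (Fin p)) := funext fun x' => hsumzero x'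
      rw [he]; exact hasFDerivAt_const 0 x
    have heq := hsum.unique hzero
    have happ : (∑ m, (fderiv ℝ (fun q : EuclideanSpace ℝ (Fin d) × EuclideanSpace ℝ (Fin p) =>
            gradient (fun y' => g m q.1 y') q.2) (x, ystar x)).comp
          ((ContinuousLinearMap.id ℝ _).prod (fderiv ℝ ystar x))) u = 0 := by
      rw [heq]; rfl
    rw [ContinuousLinearMap.sum_apply] at happ
    have hterm2 : ∀ m : Fin M, ((fderiv ℝ
          (fun q : EuclideanSpace ℝ (Fin d) × EuclideanSpace ℝ (Fin p) =>
            gradient (fun y' => g m q.1 y') q.2) (x, ystar x)).comp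
          ((ContinuousLinearMap.id ℝ _).prod (fderiv ℝ ystar x))) u
        = Hxy m x (ystar x) u + Hyy m x (ystar x) (fderiv ℝ ystar x u) := by
      intro m
      rw [ContinuousLinearMap.comp_apply]
      have he : ((ContinuousLinearMap.id ℝ _).prod (fderiv ℝ ystar x)) u
          = (u, fderiv ℝ ystar x u) := rfl
      rw [he, aux_G_fderiv (g m) (hg m) x (ystar x) u (fderiv ℝ ystar x u),
        ← hHxy m x (ystar x), ← hHyy m x (ystar x)]
    rw [Finset.sum_congr rfl fun m _ => hterm2 m, Finset.sum_add_distrib] at happ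
    rw [ContinuousLinearMap.sum_apply, ContinuousLinearMap.sum_apply]
    exact happ
  -- coercivity of the summed Hessian
  have hcoer : ∀ x y (w : EuclideanSpace ℝ (Fin p)),
      (M:ℝ) * (μ * ‖w‖ ^ 2) ≤ (inner ℝ ((∑ m, Hyy m x y) w) w : ℝ) := by
    intro x y w
    have hper : ∀ m, μ * ‖w‖ ^ 2 ≤ (inner ℝ (Hyy m x y w) w : ℝ) := by
      intro m
      have hB : HasFDerivAt (gradient (fun y' => g m x y')) (Hyy m x y) y := by
        rw [hHyy]; exact ((hgraddiff m x) y).hasFDerivAt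
      exact aux_hessian_coercive (hpdiff m x) (hsc m x) hB w
    calc (M:ℝ) * (μ * ‖w‖ ^ 2) = ∑ _m : Fin M, μ * ‖w‖ ^ 2 := by
          rw [Finset.sum_const, Finset.card_univ, Fintype.card_fin, nsmul_eq_mul]
      _ ≤ ∑ m, (inner ℝ (Hyy m x y w) w : ℝ) := Finset.sum_le_sum fun m _ => hper m
      _ = (inner ℝ ((∑ m, Hyy m x y) w) w : ℝ) := by
          rw [ContinuousLinearMap.sum_apply, sum_inner]
  have hBlow : ∀ x y (w : EuclideanSpace ℝ (Fin p)),
      (M:ℝ) * (μ * ‖w‖) ≤ ‖(∑ m, Hyy m x y) w‖ := by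
    intro x y w
    rcases eq_or_ne w 0 with rfl | hw
    · simp
    · have h1 := (hcoer x y w).trans (real_inner_le_norm _ _)
      have hwpos : 0 < ‖w‖ := norm_pos_iff.mpr hw
      calc (M:ℝ) * (μ * ‖w‖) = (M:ℝ) * (μ * ‖w‖ ^ 2) / ‖w‖ := by field_simp
        _ ≤ ‖(∑ m, Hyy m x y) w‖ * ‖w‖ / ‖w‖ := div_le_div_of_nonneg_right h1 hwpos.le
        _ = ‖(∑ m, Hyy m x y) w‖ := by field_simp
  -- norm bound on the summed cross derivative
  have hAbound : ∀ x y, ‖∑ m, Hxy m x y‖ ≤ (M:ℝ) * Cgxy := by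
    intro x y
    calc ‖∑ m, Hxy m x y‖ ≤ ∑ m, ‖Hxy m x y‖ := norm_sum_le _ _
      _ ≤ ∑ _m : Fin M, Cgxy := Finset.sum_le_sum fun m _ => hcross_bound m x y
      _ = (M:ℝ) * Cgxy := by
          rw [Finset.sum_const, Finset.card_univ, Fintype.card_fin, nsmul_eq_mul]
  -- bound on the Jacobian of ystar
  have hJ : ∀ x, ‖fderiv ℝ ystar x‖ ≤ Cgxy / μ := by
    intro x
    refine ContinuousLinearMap.opNorm_le_bound _ (by positivity) fun u => ?_
    have heq : (∑ m, Hyy m x (ystar x)) (fderiv ℝ ystar x u)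
        = -((∑ m, Hxy m x (ystar x)) u) := by
      have h' : (∑ m, Hyy m x (ystar x)) (fderiv ℝ ystar x u)
          + (∑ m, Hxy m x (ystar x)) u = 0 := by rw [add_comm]; exact hident x u
      exact eq_neg_of_add_eq_zero_left h'
    have hlow := hBlow x (ystar x) (fderiv ℝ ystar x u)
    rw [heq, norm_neg] at hlow
    have hup : ‖(∑ m, Hxy m x (ystar x)) u‖ ≤ (M:ℝ) * Cgxy * ‖u‖ :=
      (ContinuousLinearMap.le_opNorm _ _).trans
        (mul_le_mul_of_nonneg_right (hAbound x (ystar x)) (norm_nonneg u))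
    have hMm : (M:ℝ) * (μ * ‖fderiv ℝ ystar x u‖) ≤ (M:ℝ) * (Cgxy * ‖u‖) := by
      calc (M:ℝ) * (μ * ‖fderiv ℝ ystar x u‖) ≤ (M:ℝ) * Cgxy * ‖u‖ := hlow.trans hup
        _ = (M:ℝ) * (Cgxy * ‖u‖) := by ring
    have h2 : μ * ‖fderiv ℝ ystar x u‖ ≤ Cgxy * ‖u‖ := le_of_mul_le_mul_left hMm hMpos
    rw [div_mul_eq_mul_div, le_div_iff₀ hμ]
    calc ‖fderiv ℝ ystar x u‖ * μ = μ * ‖fderiv ℝ ystar x u‖ := by ring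
      _ ≤ Cgxy * ‖u‖ := h2
  -- Lipschitz bound for ystar
  have hylip : ‖ystar x1 - ystar x2‖ ≤ Cgxy / μ * ‖x1 - x2‖ :=
    convex_univ.norm_image_sub_le_of_norm_fderiv_le (fun x _ => (hystar x))
      (fun x _ => hJ x) (Set.mem_univ x2) (Set.mem_univ x1)
  set s : ℝ := Real.sqrt (‖x1 - x2‖ ^ 2 + ‖ystar x1 - ystar x2‖ ^ 2) with hsdef
  have hsnn : 0 ≤ s := Real.sqrt_nonneg _
  have hsle : s ≤ (1 + Cgxy / μ) * ‖x1 - x2‖ := by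
    have h1 : s ≤ ‖x1 - x2‖ + ‖ystar x1 - ystar x2‖ := by
      have hle : ‖x1 - x2‖ ^ 2 + ‖ystar x1 - ystar x2‖ ^ 2
          ≤ (‖x1 - x2‖ + ‖ystar x1 - ystar x2‖) ^ 2 := by
        nlinarith [norm_nonneg (x1 - x2), norm_nonneg (ystar x1 - ystar x2)]
      calc s ≤ Real.sqrt ((‖x1 - x2‖ + ‖ystar x1 - ystar x2‖) ^ 2) := Real.sqrt_le_sqrt hle
        _ = ‖x1 - x2‖ + ‖ystar x1 - ystar x2‖ := Real.sqrt_sq (by positivity)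
    calc s ≤ ‖x1 - x2‖ + ‖ystar x1 - ystar x2‖ := h1
      _ ≤ ‖x1 - x2‖ + Cgxy / μ * ‖x1 - x2‖ := by linarith [hylip]
      _ = (1 + Cgxy / μ) * ‖x1 - x2‖ := by ring
  -- Lipschitz difference bounds for the summed second derivatives
  have hAdiff : ‖(∑ m, Hxy m x1 (ystar x1)) - ∑ m, Hxy m x2 (ystar x2)‖
      ≤ (M:ℝ) * (Lgxy * s) := by
    rw [← Finset.sum_sub_distrib]
    calc ‖∑ m, (Hxy m x1 (ystar x1) - Hxy m x2 (ystar x2))‖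
        ≤ ∑ m, ‖Hxy m x1 (ystar x1) - Hxy m x2 (ystar x2)‖ := norm_sum_le _ _
      _ ≤ ∑ _m : Fin M, Lgxy * s :=
          Finset.sum_le_sum fun m _ => hcross_lip m x1 (ystar x1) x2 (ystar x2)
      _ = (M:ℝ) * (Lgxy * s) := by
          rw [Finset.sum_const, Finset.card_univ, Fintype.card_fin, nsmul_eq_mul]
  have hBdiff : ‖(∑ m, Hyy m x1 (ystar x1)) - ∑ m, Hyy m x2 (ystar x2)‖
      ≤ (M:ℝ) * (Lgyy * s) := by
    rw [← Finset.sum_sub_distrib]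
    calc ‖∑ m, (Hyy m x1 (ystar x1) - Hyy m x2 (ystar x2))‖
        ≤ ∑ m, ‖Hyy m x1 (ystar x1) - Hyy m x2 (ystar x2)‖ := norm_sum_le _ _
      _ ≤ ∑ _m : Fin M, Lgyy * s :=
          Finset.sum_le_sum fun m _ => hyy_lip m x1 (ystar x1) x2 (ystar x2)
      _ = (M:ℝ) * (Lgyy * s) := by
          rw [Finset.sum_const, Finset.card_univ, Fintype.card_fin, nsmul_eq_mul]
  -- the final operator norm estimate
  refine ContinuousLinearMap.opNorm_le_bound _ (by positivity) fun u => ?_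
  have hkey : (∑ m, Hyy m x1 (ystar x1)) ((fderiv ℝ ystar x1 - fderiv ℝ ystar x2) u)
      = ((∑ m, Hxy m x2 (ystar x2)) - (∑ m, Hxy m x1 (ystar x1))) u
        + ((∑ m, Hyy m x2 (ystar x2)) - (∑ m, Hyy m x1 (ystar x1)))
            (fderiv ℝ ystar x2 u) := by
    have e1 : (fderiv ℝ ystar x1 - fderiv ℝ ystar x2) u
        = fderiv ℝ ystar x1 u - fderiv ℝ ystar x2 u := rfl
    rw [e1, map_sub]
    simp only [ContinuousLinearMap.sub_apply]
    have e2 : (∑ m, Hyy m x1 (ystar x1)) (fderiv ℝ ystar x1 u)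
        = -((∑ m, Hxy m x1 (ystar x1)) u) := by
      have h' : (∑ m, Hyy m x1 (ystar x1)) (fderiv ℝ ystar x1 u)
          + (∑ m, Hxy m x1 (ystar x1)) u = 0 := by rw [add_comm]; exact hident x1 u
      exact eq_neg_of_add_eq_zero_left h'
    have e3 : (∑ m, Hyy m x2 (ystar x2)) (fderiv ℝ ystar x2 u)
        = -((∑ m, Hxy m x2 (ystar x2)) u) := by
      have h' : (∑ m, Hyy m x2 (ystar x2)) (fderiv ℝ ystar x2 u)
          + (∑ m, Hxy m x2 (ystar x2)) u = 0 := by rw [add_comm]; exact hident x2 u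
      exact eq_neg_of_add_eq_zero_left h'
    rw [e2, e3]
    abel
  have hJ2u : ‖fderiv ℝ ystar x2 u‖ ≤ Cgxy / μ * ‖u‖ :=
    (ContinuousLinearMap.le_opNorm _ _).trans
      (mul_le_mul_of_nonneg_right (hJ x2) (norm_nonneg u))
  have hnormkey : (M:ℝ) * (μ * ‖(fderiv ℝ ystar x1 - fderiv ℝ ystar x2) u‖)
      ≤ (M:ℝ) * ((Lgxy * s) * ‖u‖ + (Lgyy * s) * (Cgxy / μ * ‖u‖)) := by
    calc (M:ℝ) * (μ * ‖(fderiv ℝ ystar x1 - fderiv ℝ ystar x2) u‖)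
        ≤ ‖(∑ m, Hyy m x1 (ystar x1)) ((fderiv ℝ ystar x1 - fderiv ℝ ystar x2) u)‖ :=
          hBlow x1 (ystar x1) _
      _ = ‖((∑ m, Hxy m x2 (ystar x2)) - (∑ m, Hxy m x1 (ystar x1))) u
            + ((∑ m, Hyy m x2 (ystar x2)) - (∑ m, Hyy m x1 (ystar x1)))
                (fderiv ℝ ystar x2 u)‖ := by rw [hkey]
      _ ≤ ‖(∑ m, Hxy m x2 (ystar x2)) - (∑ m, Hxy m x1 (ystar x1))‖ * ‖u‖
            + ‖(∑ m, Hyy m x2 (ystar x2)) - (∑ m, Hyy m x1 (ystar x1))‖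
              * ‖fderiv ℝ ystar x2 u‖ :=
          (norm_add_le _ _).trans (add_le_add (ContinuousLinearMap.le_opNorm _ _)
            (ContinuousLinearMap.le_opNorm _ _))
      _ ≤ ((M:ℝ) * (Lgxy * s)) * ‖u‖ + ((M:ℝ) * (Lgyy * s)) * (Cgxy / μ * ‖u‖) := by
          have ha : ‖(∑ m, Hxy m x2 (ystar x2)) - (∑ m, Hxy m x1 (ystar x1))‖
              ≤ (M:ℝ) * (Lgxy * s) := by rw [norm_sub_rev]; exact hAdiff
          have hb : ‖(∑ m, Hyy m x2 (ystar x2)) - (∑ m, Hyy m x1 (ystar x1))‖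
              ≤ (M:ℝ) * (Lgyy * s) := by rw [norm_sub_rev]; exact hBdiff
          gcongr
      _ = (M:ℝ) * ((Lgxy * s) * ‖u‖ + (Lgyy * s) * (Cgxy / μ * ‖u‖)) := by ring
  have h2 : μ * ‖(fderiv ℝ ystar x1 - fderiv ℝ ystar x2) u‖
      ≤ (Lgxy * s) * ‖u‖ + (Lgyy * s) * (Cgxy / μ * ‖u‖) :=
    le_of_mul_le_mul_left hnormkey hMpos
  have h3 : μ * ‖(fderiv ℝ ystar x1 - fderiv ℝ ystar x2) u‖
      ≤ μ * ((Cgxy * Lgyy / μ ^ 2 + Lgxy / μ) * (1 + Cgxy / μ) * ‖x1 - x2‖ * ‖u‖) := by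
    refine h2.trans ?_
    have hexp : μ * ((Cgxy * Lgyy / μ ^ 2 + Lgxy / μ) * (1 + Cgxy / μ) * ‖x1 - x2‖ * ‖u‖)
        = (Lgxy + Lgyy * (Cgxy / μ)) * ((1 + Cgxy / μ) * ‖x1 - x2‖) * ‖u‖ := by
      have hμne : μ ≠ 0 := ne_of_gt hμ
      field_simp
      ring
    rw [hexp]
    have hstep : (Lgxy * s) * ‖u‖ + (Lgyy * s) * (Cgxy / μ * ‖u‖)
        = (Lgxy + Lgyy * (Cgxy / μ)) * s * ‖u‖ := by ring
    rw [hstep]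
    have hc1 : 0 ≤ Lgxy + Lgyy * (Cgxy / μ) := by positivity
    gcongr
  exact le_of_mul_le_mul_left h3 hμ
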